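/- arXiv:1202.1122 — 2 statements merged into one kernel-verified Lean document; each statement's English description precedes it below -/
import Mathlib

section
/- Let a ≥ 4, J = ⟨y²+z^a, yz²⟩, E = a y ∂/∂y + 2 z ∂/∂z the Euler vector field (for which y²+z^a has quasi-degree 2a and yz² has quasi-degree a+4), and for A ≠ 0 set X = (B/((a+4)A))·z·E. Then the Lie derivative satisfies L_X(A dy∧dz) = B z dy∧dz, and L_X(B z dy∧dz) has zero algebraic restriction to J, and the flow of X preserves the ideal J. -/
open Filter Topology

set_option maxHeartbeats 1000000
set_option synthInstance.maxHeartbeats 400000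

noncomputable section

/-- The space `ℂ^m`. -/
abbrev Cm (m : ℕ) := Fin m → ℂ

/-- Model of the ring of `ℂ`-analytic function-germs at `0` on `ℂ^m`:
functions that are analytic at `0`. -/
def AnalyticGermRing (m : ℕ) : Subalgebra ℂ (Cm m → ℂ) where
  carrier := {f | AnalyticAt ℂ f 0}
  mul_mem' := fun hf hg => hf.mul hg
  add_mem' := fun hf hg => hf.add hg
  algebraMap_mem' := fun _ => analyticAt_const

/-- `O m` : the ring of analytic function-germs at `0 ∈ ℂ^m` (model). -/
abbrev O (m : ℕ) := AnalyticGermRing m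

theorem coord_analyticAt (m : ℕ) (i : Fin m) (x : Cm m) :
    AnalyticAt ℂ (fun y : Cm m => y i) x :=
  (ContinuousLinearMap.proj (R := ℂ) (φ := fun _ : Fin m => ℂ) i).analyticAt x

/-- The `i`-th coordinate function as an analytic germ. -/
def coordO (m : ℕ) (i : Fin m) : O m := ⟨fun y => y i, coord_analyticAt m i 0⟩

/-- Partial derivative `∂/∂x_i` on analytic germs. -/
def pd {m : ℕ} (i : Fin m) (f : O m) : O m :=
  ⟨fun x => fderiv ℂ (f : Cm m → ℂ) x (Pi.single i 1), by
    have h1 : AnalyticAt ℂ (fderiv ℂ (f : Cm m → ℂ)) 0 := f.2.fderiv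
    have h2 := (ContinuousLinearMap.apply ℂ ℂ (Pi.single i 1 : Cm m)).analyticAt
      (fderiv ℂ (f : Cm m → ℂ) 0)
    exact h2.comp h1⟩

/-- Germs of analytic differential `p`-forms on `ℂ^m`, given by their
coefficient family: `ω J` is the coefficient of `dx_{J 0} ⊗ ⋯ ⊗ dx_{J (p-1)}`. -/
abbrev Form (m p : ℕ) := (Fin p → Fin m) → O m

/-- A form is alternating: coefficients vanish on non-injective indices and are
antisymmetric under permutations. -/
def IsAlt {m p : ℕ} (ω : Form m p) : Prop :=
  (∀ J : Fin p → Fin m, ¬ Function.Injective J → ω J = 0) ∧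
  ∀ (J : Fin p → Fin m) (σ : Equiv.Perm (Fin p)),
    ω (J ∘ σ) = ((Equiv.Perm.sign σ : ℤ) : ℂ) • ω J

/-- Exterior derivative on coefficient families. -/
def extD {m p : ℕ} (ω : Form m p) : Form m (p + 1) :=
  fun J => ∑ i : Fin (p + 1), ((-1 : ℂ) ^ (i : ℕ)) • pd (J i) (ω (J ∘ i.succAbove))

/-- Exterior derivative from degree `p-1` to degree `p` (zero in degree `0`). -/
def dLow {m : ℕ} : {p : ℕ} → Form m (p - 1) → Form m p
  | 0, _ => 0
  | _ + 1, β => extD β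

/-- `ω ∈ I·Λ^p`: all coefficients lie in the ideal `I`. -/
def memIF {m p : ℕ} (I : Ideal (O m)) (ω : Form m p) : Prop := ∀ J, ω J ∈ I

/-- Equality of forms as germs at `0`. -/
def FormEq {m p : ℕ} (ω₁ ω₂ : Form m p) : Prop :=
  ∀ J, ((ω₁ J : Cm m → ℂ)) =ᶠ[𝓝 (0 : Cm m)] (ω₂ J : Cm m → ℂ)

/-- `ω` has zero algebraic restriction to `I`:
`ω = α + dβ` with `α ∈ I·Λ^p`, `β ∈ I·Λ^{p-1}`. -/
def ZeroAR {m p : ℕ} (I : Ideal (O m)) (ω : Form m p) : Prop :=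
  ∃ (α : Form m p) (β : Form m (p - 1)),
    memIF I α ∧ memIF I β ∧ FormEq ω (α + dLow β)

/-- Interior product with a vector field. -/
def iprod {m : ℕ} (X : Fin m → O m) : {p : ℕ} → Form m p → Form m (p - 1)
  | 0, _ => 0
  | _ + 1, ω => fun J => ∑ k : Fin m, X k * ω (Fin.cons k J)

/-- Lie derivative of a form along a vector field (Cartan's formula). -/
def lieD {m p : ℕ} (X : Fin m → O m) (ω : Form m p) : Form m p :=
  dLow (iprod X ω) + (show Form m p from iprod X (extD ω))

/-- Wedge product of forms (on coefficient families, with the usual normalization). -/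
def wedge {m p q : ℕ} (ω : Form m p) (γ : Form m q) : Form m (p + q) :=
  ((p.factorial * q.factorial : ℂ))⁻¹ •
    (fun K => ∑ σ : Equiv.Perm (Fin (p + q)),
      ((Equiv.Perm.sign σ : ℤ) : ℂ) •
        (ω (fun i => K (σ (Fin.castAdd q i))) * γ (fun j => K (σ (Fin.natAdd p j)))))

/-- Coefficient family of the pullback `Φ^*ω` (as plain functions). -/
def formPullFun {k m p : ℕ} (Φ : Cm k → Cm m) (ω : Form m p) :
    (Fin p → Fin k) → Cm k → ℂ :=
  fun J x => ∑ K : Fin p → Fin m,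
    (ω K : Cm m → ℂ) (Φ x) *
      ∏ i : Fin p, fderiv ℂ (fun y => Φ y (K i)) x (Pi.single (J i) 1)

/-- The analytic form `ω'` represents the coefficient family `c` (as germs at `0`). -/
def Represents {k p : ℕ} (ω' : Form k p) (c : (Fin p → Fin k) → Cm k → ℂ) : Prop :=
  ∀ J, (ω' J : Cm k → ℂ) =ᶠ[𝓝 (0 : Cm k)] c J

/-- `Φ^*I = I` : `f ∈ I` iff `f ∘ Φ` is (the germ of) an element of `I`. -/
def PreservesIdeal {m : ℕ} (Φ : Cm m → Cm m) (I : Ideal (O m)) : Prop :=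
  ∀ f : O m, f ∈ I ↔
    ∃ g ∈ I, (g : Cm m → ℂ) =ᶠ[𝓝 (0 : Cm m)] fun x => (f : Cm m → ℂ) (Φ x)

/-- A diffeomorphism-germ of `(ℂ^m, 0)` (model). -/
structure LocalDiffeo (m : ℕ) where
  toFun : Cm m → Cm m
  invFun : Cm m → Cm m
  an : AnalyticAt ℂ toFun 0
  map_zero : toFun 0 = 0
  left_inv : ∀ᶠ x in 𝓝 (0 : Cm m), invFun (toFun x) = x
  right_inv : ∀ᶠ x in 𝓝 (0 : Cm m), toFun (invFun x) = x

/-- The algebraic restrictions `[ω₁]_I` and `[ω₂]_I` are diffeomorphic (via a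
diffeomorphism-germ preserving `I`). -/
def ARDiffeomorphic {m p : ℕ} (I : Ideal (O m)) (ω₁ ω₂ : Form m p) : Prop :=
  ∃ Φ : LocalDiffeo m, PreservesIdeal Φ.toFun I ∧
    ∀ ω' : Form m p, Represents ω' (formPullFun Φ.toFun ω₂) → ZeroAR I (ω' - ω₁)

/-- The Euler vector field `Σ λ_i x_i ∂/∂x_i`. -/
def eulerVF (m : ℕ) (lam : Fin m → ℕ) : Fin m → O m :=
  fun i => ((lam i : ℂ)) • coordO m i

/-- The coordinate `y` on `ℂ²`. -/
def Y : O 2 := coordO 2 0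
/-- The coordinate `z` on `ℂ²`. -/
def Z : O 2 := coordO 2 1

/-- The 1-form `g dy + h dz` on `ℂ²`. -/
def oneF (g h : O 2) : Form 2 1 := fun J => if J 0 = 0 then g else h

/-- The 2-form `f dy ∧ dz` on `ℂ²`. -/
def twoF (f : O 2) : Form 2 2 :=
  fun J => if J 0 = 0 ∧ J 1 = 1 then f else if J 0 = 1 ∧ J 1 = 0 then -f else 0


section CoeO
@[simp] lemma coeO_smul (s : ℂ) (f : O 2) (y : Cm 2) :
    ((s • f : O 2) : Cm 2 → ℂ) y = s * (f : Cm 2 → ℂ) y := rfl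
@[simp] lemma coeO_mul (f g : O 2) (y : Cm 2) :
    ((f * g : O 2) : Cm 2 → ℂ) y = (f : Cm 2 → ℂ) y * (g : Cm 2 → ℂ) y := rfl
@[simp] lemma coeO_add (f g : O 2) (y : Cm 2) :
    ((f + g : O 2) : Cm 2 → ℂ) y = (f : Cm 2 → ℂ) y + (g : Cm 2 → ℂ) y := rfl
@[simp] lemma coeO_neg (f : O 2) (y : Cm 2) :
    ((-f : O 2) : Cm 2 → ℂ) y = -((f : Cm 2 → ℂ) y) := rfl
@[simp] lemma coeO_zero (y : Cm 2) : (((0 : O 2)) : Cm 2 → ℂ) y = 0 := rfl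
@[simp] lemma coeO_one (y : Cm 2) : (((1 : O 2)) : Cm 2 → ℂ) y = 1 := rfl
@[simp] lemma coeO_pow (f : O 2) (n : ℕ) (y : Cm 2) :
    ((f ^ n : O 2) : Cm 2 → ℂ) y = ((f : Cm 2 → ℂ) y) ^ n := by
  induction n with
  | zero => simp [pow_zero]
  | succ n ih => rw [pow_succ, coeO_mul, ih, pow_succ]
@[simp] lemma coeO_Y (y : Cm 2) : ((Y : O 2) : Cm 2 → ℂ) y = y 0 := rfl
@[simp] lemma coeO_Z (y : Cm 2) : ((Z : O 2) : Cm 2 → ℂ) y = y 1 := rfl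
end CoeO
section PD
def P (i : Fin 2) : Cm 2 →L[ℂ] ℂ := ContinuousLinearMap.proj i
lemma hP (i : Fin 2) (x : Cm 2) : HasFDerivAt (fun y : Cm 2 => y i) (P i) x :=
  (P i).hasFDerivAt
@[simp] lemma Papp_00 : (P 0) (Pi.single 0 (1:ℂ)) = 1 := by simp [P]
@[simp] lemma Papp_11 : (P 1) (Pi.single 1 (1:ℂ)) = 1 := by simp [P]
@[simp] lemma Papp_01 : (P 0) (Pi.single 1 (1:ℂ)) = 0 := by
  simp [P, Pi.single_eq_of_ne (show (1:Fin 2) ≠ 0 by decide)]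
@[simp] lemma Papp_10 : (P 1) (Pi.single 0 (1:ℂ)) = 0 := by
  simp [P, Pi.single_eq_of_ne (show (0:Fin 2) ≠ 1 by decide)]
lemma pd_eval {f : O 2} {F : Cm 2 → ℂ} {L : Cm 2 →L[ℂ] ℂ} (i : Fin 2) (x : Cm 2)
    (h : (f : Cm 2 → ℂ) = F) (hL : HasFDerivAt F L x) :
    (pd i f : Cm 2 → ℂ) x = L (Pi.single i 1) := by
  show fderiv ℂ (f : Cm 2 → ℂ) x (Pi.single i 1) = _
  rw [h, hL.fderiv]
lemma pd_const {f : O 2} {C : ℂ} (h : (f : Cm 2 → ℂ) = fun _ => C) (i : Fin 2) (x : Cm 2) :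
    (pd i f : Cm 2 → ℂ) x = 0 := by
  rw [pd_eval i x h (hasFDerivAt_const C x)]; simp
@[simp] lemma cons_one2 {α : Type*} (x : α) (p : Fin 1 → α) : (Fin.cons x p : Fin 2 → α) 1 = p 0 := rfl
@[simp] lemma cons_one3 {α : Type*} (x : α) (p : Fin 2 → α) : (Fin.cons x p : Fin 3 → α) 1 = p 0 := rfl
@[simp] lemma cons_two3 {α : Type*} (x : α) (p : Fin 2 → α) : (Fin.cons x p : Fin 3 → α) 2 = p 1 := rfl
end PD

section Part3

lemma part3_lemma (a : ℕ) (A B c : ℂ) (hcA : c * ((a:ℂ) + 4) * A = B) :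
    FormEq (lieD ![(c * (a:ℂ)) • (Z * Y), (2 * c) • (Z ^ 2)] (twoF (A • 1))) (twoF (B • Z)) := by
  set X : Fin 2 → O 2 := ![(c * (a:ℂ)) • (Z * Y), (2 * c) • (Z ^ 2)] with hX
  have hγ : ∀ K : Fin 1 → Fin 2,
      ((iprod X (twoF (A • 1)) K : O 2) : Cm 2 → ℂ) =
        if K 0 = 0 then (fun y => (-(2*c*A)) * (y 1 * y 1)) else (fun y => (c*(a:ℂ)*A) * (y 1 * y 0)) := by
    intro K
    obtain ⟨k, rfl⟩ : ∃ k, K = fun _ => k := ⟨K 0, by funext i; fin_cases i; rfl⟩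
    fin_cases k <;>
    · funext y
      simp [iprod, X, Fin.sum_univ_two, twoF, Z, Y, coordO]
      ring
  have hpdγ : ∀ (i : Fin 2) (K : Fin 1 → Fin 2) (x : Cm 2),
      ((pd i (iprod X (twoF (A • 1)) K)) : Cm 2 → ℂ) x =
      if K 0 = 0 then (if i = 0 then 0 else -(2*c*A)*(x 1 + x 1))
      else (if i = 0 then c*(a:ℂ)*A*(x 1) else c*(a:ℂ)*A*(x 0)) := by
    intro i K x
    obtain ⟨k, rfl⟩ : ∃ k, K = fun _ => k := ⟨K 0, by funext j; fin_cases j; rfl⟩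
    fin_cases k
    · rw [pd_eval i x ((hγ _).trans (by simp)) (((hP 1 x).mul (hP 1 x)).const_mul (-(2*c*A)))]
      fin_cases i <;> · simp; try ring
    · rw [pd_eval i x ((hγ _).trans (by simp)) (((hP 1 x).mul (hP 0 x)).const_mul (c*(a:ℂ)*A))]
      fin_cases i <;> · simp; try ring
  have hconst : ∀ IDX : Fin 2 → Fin 2, ∃ C : ℂ,
      ((twoF (A • 1) IDX : O 2) : Cm 2 → ℂ) = fun _ => C := by
    intro IDX
    unfold twoF
    split_ifs
    · exact ⟨A, by funext y; simp⟩
    · exact ⟨-A, by funext y; simp⟩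
    · exact ⟨0, by funext y; simp⟩
  have hsecond : ∀ (J : Fin 2 → Fin 2) (x : Cm 2),
      ((iprod X (extD (twoF (A • 1))) J : O 2) : Cm 2 → ℂ) x = 0 := by
    intro J x
    have hE : ∀ (K : Fin 3 → Fin 2), ((extD (twoF (A • 1)) K : O 2) : Cm 2 → ℂ) x = 0 := by
      intro K
      show ((∑ i : Fin 3, ((-1:ℂ)^(i:ℕ)) • pd (K i) (twoF (A • 1) (K ∘ i.succAbove)) : O 2) : Cm 2 → ℂ) x = 0
      rw [AddSubmonoidClass.coe_finset_sum, Finset.sum_apply]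
      apply Finset.sum_eq_zero
      intro i _
      obtain ⟨C, hC⟩ := hconst (K ∘ i.succAbove)
      have := pd_const hC (K i) x
      simp [this]
    show ((∑ k : Fin 2, X k * extD (twoF (A • 1)) (Fin.cons k J) : O 2) : Cm 2 → ℂ) x = 0
    rw [AddSubmonoidClass.coe_finset_sum, Finset.sum_apply]
    apply Finset.sum_eq_zero
    intro k _
    simp [hE (Fin.cons k J)]
  intro J
  obtain ⟨j0, j1, rfl⟩ : ∃ j0 j1, J = ![j0, j1] :=
    ⟨J 0, J 1, by funext i; fin_cases i <;> rfl⟩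
  apply Filter.Eventually.of_forall
  intro x
  show ((extD (iprod X (twoF (A • 1))) ![j0,j1] + iprod X (extD (twoF (A • 1))) ![j0,j1] : O 2) : Cm 2 → ℂ) x = _
  rw [AddMemClass.coe_add, Pi.add_apply, hsecond, add_zero]
  show ((∑ i : Fin 2, ((-1:ℂ)^(i:ℕ)) • pd ((![j0,j1]) i) (iprod X (twoF (A • 1)) ((![j0,j1]) ∘ i.succAbove)) : O 2) : Cm 2 → ℂ) x = _
  rw [AddSubmonoidClass.coe_finset_sum, Finset.sum_apply, Fin.sum_univ_two]
  have e0 : (![j0,j1] : Fin 2 → Fin 2) ∘ Fin.succAbove 0 = fun _ => j1 := by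
    funext i; fin_cases i; rfl
  have e1 : (![j0,j1] : Fin 2 → Fin 2) ∘ Fin.succAbove 1 = fun _ => j0 := by
    funext i; fin_cases i; rfl
  rw [e0, e1]
  fin_cases j0 <;> fin_cases j1 <;>
  · simp only [Matrix.cons_val_zero, Matrix.cons_val_one, Matrix.head_cons]
    norm_num [twoF, Z, coordO, hpdγ]
    try linear_combination x 1 * hcA
    try linear_combination -(x 1) * hcA
end Part3
section Part4

lemma part4_lemma (a : ℕ) (B c : ℂ) :
    ZeroAR (Ideal.span {Y ^ 2 + Z ^ a, Y * Z ^ 2})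
      (lieD ![(c * (a:ℂ)) • (Z * Y), (2 * c) • (Z ^ 2)] (twoF (B • Z))) := by
  set X : Fin 2 → O 2 := ![(c * (a:ℂ)) • (Z * Y), (2 * c) • (Z ^ 2)] with hX
  refine ⟨0, oneF 0 ((c * B * ((a:ℂ) + 6)) • (Y * Z^2)), fun J => Ideal.zero_mem _, ?_, ?_⟩
  · intro J
    unfold oneF
    split_ifs
    · exact Ideal.zero_mem _
    · have h2 : (Y * Z^2 : O 2) ∈ Ideal.span {Y ^ 2 + Z ^ a, Y * Z ^ 2} :=
        Ideal.subset_span (by simp)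
      rw [Algebra.smul_def]
      exact Ideal.mul_mem_left _ _ h2
  · have hpdω : ∀ (i : Fin 2) (IDX : Fin 2 → Fin 2) (x : Cm 2),
        ((pd i (twoF (B • Z) IDX)) : Cm 2 → ℂ) x =
        if IDX 0 = 0 ∧ IDX 1 = 1 then (if i = 1 then B else 0)
        else if IDX 0 = 1 ∧ IDX 1 = 0 then (if i = 1 then -B else 0) else 0 := by
      intro i IDX x
      by_cases h1 : IDX 0 = 0 ∧ IDX 1 = 1
      · rw [if_pos h1]
        have ht : twoF (B • Z) IDX = B • Z := by unfold twoF; rw [if_pos h1]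
        rw [ht, pd_eval i x (F := fun y => B * y 1) (by funext y; simp)
          ((hP 1 x).const_mul B)]
        fin_cases i <;> simp [Fin.ext_iff]
      · rw [if_neg h1]
        by_cases h2 : IDX 0 = 1 ∧ IDX 1 = 0
        · rw [if_pos h2]
          have ht : twoF (B • Z) IDX = -(B • Z) := by unfold twoF; rw [if_neg h1, if_pos h2]
          rw [ht, pd_eval i x (F := fun y => -(B * y 1)) (by funext y; simp)
            (((hP 1 x).const_mul B).neg)]
          fin_cases i <;> simp [Fin.ext_iff]
        · rw [if_neg h2]
          have ht : twoF (B • Z) IDX = 0 := by unfold twoF; rw [if_neg h1, if_neg h2]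
          rw [ht, pd_const (C := 0) (by funext y; simp) i x]
    have hγ : ∀ K : Fin 1 → Fin 2,
        ((iprod X (twoF (B • Z)) K : O 2) : Cm 2 → ℂ) =
          if K 0 = 0 then (fun y => (-(2*c*B)) * (y 1 * (y 1 * y 1)))
          else (fun y => (c*(a:ℂ)*B) * (y 1 * (y 1 * y 0))) := by
      intro K
      obtain ⟨k, rfl⟩ : ∃ k, K = fun _ => k := ⟨K 0, by funext i; fin_cases i; rfl⟩
      fin_cases k <;>
      · funext y
        simp [iprod, X, Fin.sum_univ_two, twoF]
        ring
    have hpdγ : ∀ (i : Fin 2) (K : Fin 1 → Fin 2) (x : Cm 2),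
        ((pd i (iprod X (twoF (B • Z)) K)) : Cm 2 → ℂ) x =
        if K 0 = 0 then (if i = 0 then 0 else -(2*c*B)*(x 1 * x 1 + (x 1 * x 1 + x 1 * x 1)))
        else (if i = 0 then c*(a:ℂ)*B*(x 1 * x 1) else c*(a:ℂ)*B*(x 1 * x 0 + x 1 * x 0)) := by
      intro i K x
      obtain ⟨k, rfl⟩ : ∃ k, K = fun _ => k := ⟨K 0, by funext j; fin_cases j; rfl⟩
      fin_cases k
      · rw [pd_eval i x ((hγ _).trans (by simp))
          (((hP 1 x).mul ((hP 1 x).mul (hP 1 x))).const_mul (-(2*c*B)))]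
        fin_cases i <;> · simp [Fin.ext_iff]; try ring
      · rw [pd_eval i x ((hγ _).trans (by simp))
          (((hP 1 x).mul ((hP 1 x).mul (hP 0 x))).const_mul (c*(a:ℂ)*B))]
        fin_cases i <;> · simp [Fin.ext_iff]; try ring
    have hE2 : ∀ (K : Fin 3 → Fin 2) (x : Cm 2),
        ((extD (twoF (B • Z)) K : O 2) : Cm 2 → ℂ) x = 0 := by
      intro K x
      obtain ⟨k0, k1, k2, rfl⟩ : ∃ k0 k1 k2, K = ![k0, k1, k2] :=
        ⟨K 0, K 1, K 2, by funext i; fin_cases i <;> rfl⟩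
      show ((∑ i : Fin 3, ((-1:ℂ)^(i:ℕ)) • pd ((![k0,k1,k2]) i)
          (twoF (B • Z) ((![k0,k1,k2]) ∘ i.succAbove)) : O 2) : Cm 2 → ℂ) x = 0
      rw [AddSubmonoidClass.coe_finset_sum, Finset.sum_apply, Fin.sum_univ_three]
      have e0 : (![k0,k1,k2] : Fin 3 → Fin 2) ∘ Fin.succAbove 0 = ![k1,k2] := by
        funext i; fin_cases i <;> rfl
      have e1 : (![k0,k1,k2] : Fin 3 → Fin 2) ∘ Fin.succAbove 1 = ![k0,k2] := by
        funext i; fin_cases i <;> rfl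
      have e2 : (![k0,k1,k2] : Fin 3 → Fin 2) ∘ Fin.succAbove 2 = ![k0,k1] := by
        funext i; fin_cases i <;> rfl
      rw [e0, e1, e2]
      fin_cases k0 <;> fin_cases k1 <;> fin_cases k2 <;>
      · simp only [Matrix.cons_val_zero, Matrix.cons_val_one, Matrix.head_cons,
          Pi.smul_apply, smul_eq_mul]
        norm_num [hpdω, Matrix.cons_val_two]
    have hsecond : ∀ (J : Fin 2 → Fin 2) (x : Cm 2),
        ((iprod X (extD (twoF (B • Z))) J : O 2) : Cm 2 → ℂ) x = 0 := by
      intro J x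
      show ((∑ k : Fin 2, X k * extD (twoF (B • Z)) (Fin.cons k J) : O 2) : Cm 2 → ℂ) x = 0
      rw [AddSubmonoidClass.coe_finset_sum, Finset.sum_apply]
      apply Finset.sum_eq_zero
      intro k _
      rw [coeO_mul, hE2 (Fin.cons k J) x, mul_zero]
    have hpdβ : ∀ (i : Fin 2) (x : Cm 2),
        ((pd i (((c * B * ((a:ℂ) + 6)) • (Y * Z^2) : O 2))) : Cm 2 → ℂ) x =
        if i = 0 then (c * B * ((a:ℂ) + 6)) * (x 1 * x 1)
        else (c * B * ((a:ℂ) + 6)) * (x 0 * x 1 + x 0 * x 1) := by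
      intro i x
      rw [pd_eval i x (F := fun y => (c * B * ((a:ℂ) + 6)) * (y 0 * (y 1 * y 1)))
        (by funext y; simp only [coeO_smul, coeO_mul, coeO_pow, coeO_Y, coeO_Z]; ring)
        (((hP 0 x).mul ((hP 1 x).mul (hP 1 x))).const_mul (c * B * ((a:ℂ) + 6)))]
      fin_cases i <;> · simp [Fin.ext_iff]; try ring
    have hpd0 : ∀ (i : Fin 2) (x : Cm 2), ((pd i ((0 : O 2))) : Cm 2 → ℂ) x = 0 :=
      fun i x => pd_const (C := 0) (by funext y; simp) i x
    intro J
    obtain ⟨j0, j1, rfl⟩ : ∃ j0 j1, J = ![j0, j1] :=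
      ⟨J 0, J 1, by funext i; fin_cases i <;> rfl⟩
    apply Filter.Eventually.of_forall
    intro x
    show ((extD (iprod X (twoF (B • Z))) ![j0,j1] + iprod X (extD (twoF (B • Z))) ![j0,j1] : O 2) : Cm 2 → ℂ) x
      = (((0 : Form 2 2) ![j0,j1] + extD (oneF 0 ((c * B * ((a:ℂ) + 6)) • (Y * Z^2))) ![j0,j1] : O 2) : Cm 2 → ℂ) x
    rw [coeO_add, hsecond, add_zero, coeO_add]
    have z0 : (((0 : Form 2 2) ![j0,j1] : O 2) : Cm 2 → ℂ) x = 0 := rfl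
    rw [z0, zero_add]
    show ((∑ i : Fin 2, ((-1:ℂ)^(i:ℕ)) • pd ((![j0,j1]) i) (iprod X (twoF (B • Z)) ((![j0,j1]) ∘ i.succAbove)) : O 2) : Cm 2 → ℂ) x
      = ((∑ i : Fin 2, ((-1:ℂ)^(i:ℕ)) • pd ((![j0,j1]) i) (oneF 0 ((c * B * ((a:ℂ) + 6)) • (Y * Z^2)) ((![j0,j1]) ∘ i.succAbove)) : O 2) : Cm 2 → ℂ) x
    rw [AddSubmonoidClass.coe_finset_sum, Finset.sum_apply, Fin.sum_univ_two,
      AddSubmonoidClass.coe_finset_sum, Finset.sum_apply, Fin.sum_univ_two]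
    have e0 : ∀ j0 j1 : Fin 2, (![j0,j1] : Fin 2 → Fin 2) ∘ Fin.succAbove 0 = fun _ => j1 := by
      intro j0 j1; funext i; fin_cases i; rfl
    have e1 : ∀ j0 j1 : Fin 2, (![j0,j1] : Fin 2 → Fin 2) ∘ Fin.succAbove 1 = fun _ => j0 := by
      intro j0 j1; funext i; fin_cases i; rfl
    rw [e0, e1]
    fin_cases j0 <;> fin_cases j1 <;>
    · simp only [Matrix.cons_val_zero, Matrix.cons_val_one, Matrix.head_cons,
        Pi.smul_apply, smul_eq_mul, oneF]
      norm_num [hpdγ, hpdβ, hpd0]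
      try ring
end Part4
section Part5
open Complex

/-- explicit time-s flow map of the vector field X -/
def Theta (a : ℕ) (c : ℂ) (s : ℝ) (x : Cm 2) : Cm 2 :=
  ![x 0 * Complex.exp (-((a:ℂ)/2) * Complex.log (1 - 2*c*(s:ℂ)*(x 1))),
    x 1 * (1 - 2*c*(s:ℂ)*(x 1))⁻¹]

lemma Theta_zero (a : ℕ) (c : ℂ) (s : ℝ) : Theta a c s 0 = 0 := by
  funext i
  fin_cases i <;> simp [Theta]

lemma Theta_time_zero (a : ℕ) (c : ℂ) (x : Cm 2) : Theta a c 0 x = x := by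
  funext i
  fin_cases i <;> simp [Theta]

lemma aff_analytic (c : ℂ) (s : ℝ) (x : Cm 2) :
    AnalyticAt ℂ (fun y : Cm 2 => 1 - 2*c*(s:ℂ)*(y 1)) x :=
  analyticAt_const.sub (analyticAt_const.mul (coord_analyticAt 2 1 x))

lemma re_big {c : ℂ} {s : ℝ} {x : Cm 2} (hs : |s| ≤ 1)
    (hx : ‖x‖ < (4*(‖c‖+1))⁻¹) : (1/2 : ℝ) < (1 - 2*c*(s:ℂ)*(x 1)).re := by
  have h1 : norm (2*c*(s:ℂ)*(x 1)) ≤ 2 * ‖c‖ * ‖x‖ := by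
    have hx1 : norm (x 1) ≤ ‖x‖ := norm_le_pi_norm x 1
    have habs : norm ((s:ℂ)) ≤ 1 := by
      rw [Complex.norm_real, Real.norm_eq_abs]; exact hs
    calc norm (2*c*(s:ℂ)*(x 1))
        = 2 * ‖c‖ * norm ((s:ℂ)) * norm (x 1) := by
          simp [map_mul, Complex.norm_two]; try ring
      _ ≤ 2 * ‖c‖ * 1 * ‖x‖ := by
          apply mul_le_mul _ hx1 (norm_nonneg _) (by positivity)
          exact mul_le_mul_of_nonneg_left habs (by positivity)
      _ = 2 * ‖c‖ * ‖x‖ := by ring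
  have h2 : 2 * ‖c‖ * ‖x‖ < 1/2 := by
    have hc1 : ‖c‖ < ‖c‖ + 1 := by linarith
    have h3 : 2 * ‖c‖ * ‖x‖ ≤ 2 * (‖c‖+1) * ‖x‖ :=
      mul_le_mul_of_nonneg_right (by nlinarith [norm_nonneg c]) (norm_nonneg x)
    have h4 : 2 * (‖c‖+1) * ‖x‖ < 2 * (‖c‖+1) * (4*(‖c‖+1))⁻¹ := by
      apply mul_lt_mul_of_pos_left (lt_of_le_of_lt (le_of_eq rfl) hx) (by positivity)
    have h5 : 2 * (‖c‖+1) * (4*(‖c‖+1))⁻¹ = 1/2 := by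
      field_simp
      try ring
    linarith
  have h6 : (2*c*(s:ℂ)*(x 1)).re ≤ norm (2*c*(s:ℂ)*(x 1)) := Complex.re_le_norm _
  have : (1 - 2*c*(s:ℂ)*(x 1)).re = 1 - (2*c*(s:ℂ)*(x 1)).re := by simp
  rw [this]
  linarith

lemma w_ne {c : ℂ} {s : ℝ} {x : Cm 2} (hs : |s| ≤ 1)
    (hx : ‖x‖ < (4*(‖c‖+1))⁻¹) : (1 - 2*c*(s:ℂ)*(x 1)) ≠ 0 := by
  intro h
  have := re_big hs hx
  rw [h] at this
  simp at this
  linarith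

lemma w_slit {c : ℂ} {s : ℝ} {x : Cm 2} (hs : |s| ≤ 1)
    (hx : ‖x‖ < (4*(‖c‖+1))⁻¹) : (1 - 2*c*(s:ℂ)*(x 1)) ∈ Complex.slitPlane := by
  rw [Complex.mem_slitPlane_iff]
  left
  linarith [re_big hs hx]

lemma w_arg {c : ℂ} {s : ℝ} {x : Cm 2} (hs : |s| ≤ 1)
    (hx : ‖x‖ < (4*(‖c‖+1))⁻¹) : (1 - 2*c*(s:ℂ)*(x 1)).arg ≠ Real.pi := by
  intro h
  rw [Complex.arg_eq_pi_iff] at h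
  linarith [re_big hs hx, h.1]

lemma Theta_analytic (a : ℕ) (c : ℂ) (s : ℝ) (hs : |s| ≤ 1) :
    AnalyticAt ℂ (Theta a c s) 0 := by
  rw [analyticAt_pi_iff]
  intro i
  have hw : AnalyticAt ℂ (fun y : Cm 2 => 1 - 2*c*(s:ℂ)*(y 1)) 0 := aff_analytic c s 0
  have hslit : (1 - 2*c*(s:ℂ)*((0:Cm 2) 1)) ∈ Complex.slitPlane := by
    apply w_slit hs
    rw [norm_zero]
    positivity
  fin_cases i
  · show AnalyticAt ℂ (fun y : Cm 2 =>
      y 0 * Complex.exp (-((a:ℂ)/2) * Complex.log (1 - 2*c*(s:ℂ)*(y 1)))) 0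
    exact (coord_analyticAt 2 0 0).mul ((analyticAt_const.mul (hw.clog hslit)).cexp)
  · show AnalyticAt ℂ (fun y : Cm 2 => y 1 * (1 - 2*c*(s:ℂ)*(y 1))⁻¹) 0
    apply (coord_analyticAt 2 1 0).mul (hw.inv (Complex.slitPlane_ne_zero hslit))
end Part5
section Part5b
open Complex

lemma flow_eq (a : ℕ) (c : ℂ) (Φ : ℝ → Cm 2 → Cm 2) (hΦ0 : Φ 0 = id)
    (hd : ∀ s ∈ Set.Icc (0:ℝ) 1, ∀ x : Cm 2, HasDerivAt (fun u => Φ u x)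
      (![(c*(a:ℂ))*(Φ s x 1 * Φ s x 0), (2*c)*(Φ s x 1 * Φ s x 1)]) s)
    (x : Cm 2) (hx : ‖x‖ < (4*(‖c‖+1))⁻¹) :
    ∀ s ∈ Set.Icc (0:ℝ) 1, Φ s x = Theta a c s x := by
  set w : ℝ → ℂ := fun s => 1 - 2*c*(s:ℂ)*(x 1) with hw
  set yθ : ℝ → ℂ := fun s => x 0 * Complex.exp (-((a:ℂ)/2) * Complex.log (w s)) with hyθdef
  set zθ : ℝ → ℂ := fun s => x 1 * (w s)⁻¹ with hzθdef
  have habs : ∀ s ∈ Set.Icc (0:ℝ) 1, |s| ≤ 1 := by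
    intro s hs; rw [abs_le]; exact ⟨by linarith [hs.1], hs.2⟩
  have hwne : ∀ s ∈ Set.Icc (0:ℝ) 1, w s ≠ 0 := fun s hs => w_ne (habs s hs) hx
  have hwslit : ∀ s ∈ Set.Icc (0:ℝ) 1, w s ∈ Complex.slitPlane :=
    fun s hs => w_slit (habs s hs) hx
  have hw' : ∀ s : ℝ, HasDerivAt w (-(2*c*(x 1))) s := by
    intro s
    have h0 : HasDerivAt (fun u : ℝ => ((u:ℂ))) 1 s := by
      simpa using (hasDerivAt_id s).ofReal_comp
    have h1 := ((h0.const_mul (2*c)).mul_const (x 1)).const_sub 1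
    simpa using h1
  have hthz : ∀ s ∈ Set.Icc (0:ℝ) 1, HasDerivAt zθ ((2*c)*(zθ s * zθ s)) s := by
    intro s hs
    have h1 := (hasDerivAt_const s (x 1)).div (hw' s) (hwne s hs)
    simp only [div_eq_mul_inv] at h1
    refine h1.congr_deriv ?_
    simp only [hzθdef]
    field_simp [hzθdef]
    ring
  have hthy : ∀ s ∈ Set.Icc (0:ℝ) 1, HasDerivAt yθ ((c*(a:ℂ))*(zθ s * yθ s)) s := by
    intro s hs
    have hlog := (hw' s).clog_real (hwslit s hs)
    have h1 := (((hlog.const_mul (-((a:ℂ)/2))).cexp).const_mul (x 0))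
    refine h1.congr_deriv ?_
    rw [hyθdef, hzθdef]
    field_simp [hwne s hs]
  have hΘd : ∀ s ∈ Set.Icc (0:ℝ) 1, HasDerivAt (fun u => Theta a c u x)
      (![(c*(a:ℂ))*(zθ s * yθ s), (2*c)*(zθ s * zθ s)]) s := by
    intro s hs
    rw [hasDerivAt_pi]
    intro i
    fin_cases i
    · exact hthy s hs
    · exact hthz s hs
  set F : ℝ → Cm 2 := fun s => Φ s x - Theta a c s x with hF
  set V : ℝ → Cm 2 := fun s =>
    ![(c*(a:ℂ))*(Φ s x 1 * Φ s x 0) - (c*(a:ℂ))*(zθ s * yθ s),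
      (2*c)*(Φ s x 1 * Φ s x 1) - (2*c)*(zθ s * zθ s)] with hV
  have hFd : ∀ s ∈ Set.Icc (0:ℝ) 1, HasDerivAt F (V s) s := by
    intro s hs
    have h1 := (hd s hs x).sub (hΘd s hs)
    refine h1.congr_deriv ?_
    funext i
    fin_cases i <;> simp [hV]
  have hFc : ContinuousOn F (Set.Icc (0:ℝ) 1) :=
    fun s hs => ((hFd s hs).continuousAt).continuousWithinAt
  -- bound
  have hΦc : ContinuousOn (fun s => Φ s x) (Set.Icc (0:ℝ) 1) :=
    fun s hs => ((hd s hs x).continuousAt).continuousWithinAt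
  have hΘc : ContinuousOn (fun s => Theta a c s x) (Set.Icc (0:ℝ) 1) :=
    fun s hs => ((hΘd s hs).continuousAt).continuousWithinAt
  obtain ⟨M1, hM1⟩ := isCompact_Icc.exists_bound_of_continuousOn hΦc
  obtain ⟨M2, hM2⟩ := isCompact_Icc.exists_bound_of_continuousOn hΘc
  set M : ℝ := |M1| + |M2| + 1 with hM
  have hMpos : 0 < M := by positivity
  have hMb : ∀ s ∈ Set.Icc (0:ℝ) 1,
      norm (Φ s x 0) ≤ M ∧ norm (Φ s x 1) ≤ M ∧
      norm (yθ s) ≤ M ∧ norm (zθ s) ≤ M := by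
    intro s hs
    have h0 : ∀ i, norm (Φ s x i) ≤ M1 :=
      fun i => le_trans (norm_le_pi_norm (Φ s x) i) (hM1 s hs)
    have h1 : ∀ i, norm (Theta a c s x i) ≤ M2 :=
      fun i => le_trans (norm_le_pi_norm (Theta a c s x) i) (hM2 s hs)
    have e0 : Theta a c s x 0 = yθ s := rfl
    have e1 : Theta a c s x 1 = zθ s := rfl
    refine ⟨le_trans (h0 0) ?_, le_trans (h0 1) ?_,
      le_trans (le_of_eq (by rw [← e0])) (le_trans (h1 0) ?_),
      le_trans (le_of_eq (by rw [← e1])) (le_trans (h1 1) ?_)⟩ <;>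
    · rw [hM]
      cases abs_cases M1 <;> cases abs_cases M2 <;> linarith
  set K : ℝ := 2*‖c‖*((a:ℝ)+2)*M with hK
  have hKpos : 0 ≤ K := by positivity
  have hbound : ∀ s ∈ Set.Ico (0:ℝ) 1, ‖V s‖ ≤ K * ‖F s‖ + 0 := by
    intro s hs
    have hs' : s ∈ Set.Icc (0:ℝ) 1 := ⟨hs.1, le_of_lt hs.2⟩
    obtain ⟨hb0, hb1, hby, hbz⟩ := hMb s hs'
    have hF0 : F s 0 = Φ s x 0 - yθ s := rfl
    have hF1 : F s 1 = Φ s x 1 - zθ s := rfl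
    have hn0 : norm (F s 0) ≤ ‖F s‖ := norm_le_pi_norm (F s) 0
    have hn1 : norm (F s 1) ≤ ‖F s‖ := norm_le_pi_norm (F s) 1
    rw [add_zero]
    have hKF : 0 ≤ K * ‖F s‖ := mul_nonneg hKpos (norm_nonneg _)
    refine (pi_norm_le_iff_of_nonneg hKF).mpr ?_
    intro i
    fin_cases i
    · -- component 0
      have e : V s 0 = (c*(a:ℂ)*(Φ s x 1)) * (F s 0) + (c*(a:ℂ)*(yθ s)) * (F s 1) := by
        rw [hF0, hF1]
        show (c*(a:ℂ))*(Φ s x 1 * Φ s x 0) - (c*(a:ℂ))*(zθ s * yθ s) = _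
        ring
      show ‖V s 0‖ ≤ K * ‖F s‖
      rw [e]
      calc norm _ ≤ norm ((c*(a:ℂ)*(Φ s x 1)) * (F s 0))
          + norm ((c*(a:ℂ)*(yθ s)) * (F s 1)) := norm_add_le _ _
        _ = ‖c‖*(a:ℝ)*norm (Φ s x 1)*norm (F s 0)
          + ‖c‖*(a:ℝ)*norm (yθ s)*norm (F s 1) := by
            simp [map_mul, Complex.norm_natCast]
            try ring
        _ ≤ ‖c‖*(a:ℝ)*M*‖F s‖ + ‖c‖*(a:ℝ)*M*‖F s‖ := by
            gcongr <;> first | exact norm_nonneg _ | assumption | positivity | exact norm_nonneg _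
        _ ≤ K * ‖F s‖ := by
            rw [hK]
            have h2 : (a:ℝ)*M ≤ ((a:ℝ)+2)*M := by nlinarith [hMpos]
            calc ‖c‖*(a:ℝ)*M*‖F s‖ + ‖c‖*(a:ℝ)*M*‖F s‖ = 2*‖c‖*((a:ℝ)*M)*‖F s‖ := by ring
              _ ≤ 2*‖c‖*(((a:ℝ)+2)*M)*‖F s‖ := by gcongr
              _ = 2*‖c‖*((a:ℝ)+2)*M*‖F s‖ := by ring
    · -- component 1
      have e : V s 1 = (2*c*(Φ s x 1 + zθ s)) * (F s 1) := by
        rw [hF1]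
        show (2*c)*(Φ s x 1 * Φ s x 1) - (2*c)*(zθ s * zθ s) = _
        ring
      show ‖V s 1‖ ≤ K * ‖F s‖
      rw [e]
      calc norm _ = 2*‖c‖*norm (Φ s x 1 + zθ s)*norm (F s 1) := by
            simp [map_mul, Complex.norm_two]
            try ring
        _ ≤ 2*‖c‖*(M + M)*‖F s‖ := by
            have hsum : norm (Φ s x 1 + zθ s) ≤ M + M :=
              le_trans (norm_add_le _ _) (by linarith)
            gcongr <;> first | exact hsum | exact hn1 | exact norm_nonneg _ | positivity
        _ ≤ K * ‖F s‖ := by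
            rw [hK]
            have h2 : M+M ≤ ((a:ℝ)+2)*M := by
              nlinarith [hMpos, mul_nonneg (Nat.cast_nonneg (α:=ℝ) a) hMpos.le]
            calc 2*‖c‖*(M+M)*‖F s‖ ≤ 2*‖c‖*(((a:ℝ)+2)*M)*‖F s‖ := by gcongr
              _ = 2*‖c‖*((a:ℝ)+2)*M*‖F s‖ := by ring
  have hF0 : ‖F (0:ℝ)‖ ≤ 0 := by
    rw [hF]
    simp only [hΦ0, Theta_time_zero, id]
    simp
  have := fun s hs => norm_le_gronwallBound_of_norm_deriv_right_le hFc
    (fun u hu => (hFd u ⟨hu.1, le_of_lt hu.2⟩).hasDerivWithinAt) hF0 hbound s hs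
  intro s hs
  have h0 := this s hs
  rw [gronwallBound_ε0_δ0] at h0
  have : F s = 0 := by
    have := norm_nonneg (F s)
    have : ‖F s‖ = 0 := le_antisymm h0 (norm_nonneg _)
    exact norm_eq_zero.mp this
  have := sub_eq_zero.mp this
  exact this
end Part5b
section Part5c
open Complex

lemma common_zero (a : ℕ) (ha : 4 ≤ a) (x : Cm 2)
    (h1 : ((Y^2 + Z^a : O 2) : Cm 2 → ℂ) x = 0)
    (h2 : ((Y * Z^2 : O 2) : Cm 2 → ℂ) x = 0) : x = 0 := by
  rw [coeO_add, coeO_pow, coeO_pow, coeO_Y, coeO_Z] at h1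
  rw [coeO_mul, coeO_pow, coeO_Y, coeO_Z] at h2
  have hx01 : x 0 = 0 ∧ x 1 = 0 := by
    rcases mul_eq_zero.mp h2 with h | h
    · constructor
      · exact h
      · rw [h] at h1
        have : (x 1)^a = 0 := by rw [← h1]; ring
        exact pow_eq_zero_iff (by omega) |>.mp this
    · have hz : x 1 = 0 := pow_eq_zero_iff (by omega) |>.mp h
      constructor
      · rw [hz] at h1
        have : (x 0)^2 = 0 := by
          rw [← h1, zero_pow (by omega)]; ring
        exact pow_eq_zero_iff (by omega) |>.mp this
      · exact hz
  funext i
  fin_cases i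
  · exact hx01.1
  · exact hx01.2

lemma mem_of_germ (a : ℕ) (ha : 4 ≤ a) (f h : O 2)
    (hh : h ∈ Ideal.span {(Y^2 + Z^a : O 2), Y * Z^2})
    (hev : (f : Cm 2 → ℂ) =ᶠ[𝓝 (0 : Cm 2)] (h : Cm 2 → ℂ)) :
    f ∈ Ideal.span {(Y^2 + Z^a : O 2), Y * Z^2} := by
  obtain ⟨p, q, hpq⟩ := Ideal.mem_span_pair.mp hh
  set g1 : Cm 2 → ℂ := ((Y^2 + Z^a : O 2) : Cm 2 → ℂ) with hg1
  set g2 : Cm 2 → ℂ := ((Y * Z^2 : O 2) : Cm 2 → ℂ) with hg2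
  set pf : Cm 2 → ℂ := fun x => if (f : Cm 2 → ℂ) x = (h : Cm 2 → ℂ) x then (p : Cm 2 → ℂ) x
    else (if g1 x = 0 then (p : Cm 2 → ℂ) x else ((f : Cm 2 → ℂ) x - (q : Cm 2 → ℂ) x * g2 x) / g1 x) with hpf
  set qf : Cm 2 → ℂ := fun x => if (f : Cm 2 → ℂ) x = (h : Cm 2 → ℂ) x then (q : Cm 2 → ℂ) x
    else (if g1 x = 0 then ((f : Cm 2 → ℂ) x - (p : Cm 2 → ℂ) x * g1 x) / g2 x else (q : Cm 2 → ℂ) x) with hqf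
  have hpfa : AnalyticAt ℂ pf 0 := by
    apply p.2.congr
    filter_upwards [hev] with x hx
    rw [hpf]
    simp [hx]
  have hqfa : AnalyticAt ℂ qf 0 := by
    apply q.2.congr
    filter_upwards [hev] with x hx
    rw [hqf]
    simp [hx]
  apply Ideal.mem_span_pair.mpr ⟨⟨pf, hpfa⟩, ⟨qf, hqfa⟩, ?_⟩
  apply Subtype.ext
  funext x
  have hco : (p : Cm 2 → ℂ) x * g1 x + (q : Cm 2 → ℂ) x * g2 x = (h : Cm 2 → ℂ) x := by
    have := congrArg (fun u : O 2 => (u : Cm 2 → ℂ) x) hpq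
    simpa [hg1, hg2] using this
  show pf x * g1 x + qf x * g2 x = (f : Cm 2 → ℂ) x
  by_cases hfh : (f : Cm 2 → ℂ) x = (h : Cm 2 → ℂ) x
  · rw [hpf, hqf]
    simp only [hfh, if_pos, if_true]
    rw [hco]
  · rw [hpf, hqf]
    simp only [if_neg hfh]
    by_cases hz1 : g1 x = 0
    · have hz2 : g2 x ≠ 0 := by
        intro hz2
        have hx0 : x = 0 := common_zero a ha x hz1 hz2
        exact hfh (by rw [hx0]; exact hev.eq_of_nhds)
      rw [if_pos hz1, if_pos hz1, hz1]
      simp only [mul_zero, zero_add, sub_zero]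
      exact div_mul_cancel₀ _ hz2
    · rw [if_neg hz1, if_neg hz1]
      field_simp
      try ring
end Part5c
section Part5d
open Complex

lemma mult_analytic (c e : ℂ) (s : ℝ) :
    AnalyticAt ℂ (fun x : Cm 2 => Complex.exp (e * Complex.log (1 - 2*c*(s:ℂ)*(x 1)))) 0 := by
  have hw : AnalyticAt ℂ (fun y : Cm 2 => 1 - 2*c*(s:ℂ)*(y 1)) 0 := aff_analytic c s 0
  have hslit : (1 - 2*c*(s:ℂ)*((0:Cm 2) 1)) ∈ Complex.slitPlane := by
    simp [Complex.mem_slitPlane_iff]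
  exact (analyticAt_const.mul (hw.clog hslit)).cexp

lemma gen1_comp (a : ℕ) (c : ℂ) (s : ℝ) (x : Cm 2)
    (hwne : (1 - 2*c*(s:ℂ)*(x 1)) ≠ 0) :
    ((Y^2 + Z^a : O 2) : Cm 2 → ℂ) (Theta a c s x) =
      Complex.exp (-(a:ℂ) * Complex.log (1 - 2*c*(s:ℂ)*(x 1)))
        * ((Y^2 + Z^a : O 2) : Cm 2 → ℂ) x := by
  set w : ℂ := 1 - 2*c*(s:ℂ)*(x 1) with hw
  have hth0 : Theta a c s x 0 = x 0 * Complex.exp (-((a:ℂ)/2) * Complex.log w) := rfl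
  have hth1 : Theta a c s x 1 = x 1 * w⁻¹ := rfl
  rw [coeO_add, coeO_pow, coeO_pow, coeO_Y, coeO_Z, coeO_add, coeO_pow, coeO_pow, coeO_Y, coeO_Z,
    hth0, hth1]
  have hinv : w⁻¹ = Complex.exp (-(Complex.log w)) := by
    conv_lhs => rw [← Complex.exp_log hwne]
    rw [← Complex.exp_neg]
  have h1 : (Complex.exp (-((a:ℂ)/2) * Complex.log w))^2
      = Complex.exp (-(a:ℂ) * Complex.log w) := by
    rw [← Complex.exp_nat_mul]
    congr 1
    push_cast
    ring
  have h2 : (w⁻¹)^a = Complex.exp (-(a:ℂ) * Complex.log w) := by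
    rw [hinv, ← Complex.exp_nat_mul]
    congr 1
    ring
  rw [mul_pow, mul_pow, h1, h2]
  ring

lemma gen2_comp (a : ℕ) (c : ℂ) (s : ℝ) (x : Cm 2)
    (hwne : (1 - 2*c*(s:ℂ)*(x 1)) ≠ 0) :
    ((Y * Z^2 : O 2) : Cm 2 → ℂ) (Theta a c s x) =
      Complex.exp ((-((a:ℂ)+4)/2) * Complex.log (1 - 2*c*(s:ℂ)*(x 1)))
        * ((Y * Z^2 : O 2) : Cm 2 → ℂ) x := by
  set w : ℂ := 1 - 2*c*(s:ℂ)*(x 1) with hw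
  have hth0 : Theta a c s x 0 = x 0 * Complex.exp (-((a:ℂ)/2) * Complex.log w) := rfl
  have hth1 : Theta a c s x 1 = x 1 * w⁻¹ := rfl
  rw [coeO_mul, coeO_pow, coeO_Y, coeO_Z, coeO_mul, coeO_pow, coeO_Y, coeO_Z, hth0, hth1]
  have hinv : w⁻¹ = Complex.exp (-(Complex.log w)) := by
    conv_lhs => rw [← Complex.exp_log hwne]
    rw [← Complex.exp_neg]
  have h2 : (w⁻¹)^2 = Complex.exp ((-2 : ℂ) * Complex.log w) := by
    rw [hinv, ← Complex.exp_nat_mul]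
    congr 1
    push_cast
    ring
  rw [mul_pow, h2]
  rw [show x 0 * Complex.exp (-((a:ℂ)/2) * Complex.log w) * ((x 1)^2 * Complex.exp ((-2:ℂ) * Complex.log w))
    = (Complex.exp (-((a:ℂ)/2) * Complex.log w) * Complex.exp ((-2:ℂ) * Complex.log w)) * (x 0 * (x 1)^2) from by ring]
  rw [← Complex.exp_add]
  congr 2
  ring

lemma comp_mem (a : ℕ) (ha : 4 ≤ a) (c : ℂ) (s : ℝ) (hs : |s| ≤ 1) (g : O 2)
    (hg : g ∈ Ideal.span {(Y^2 + Z^a : O 2), Y * Z^2}) :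
    ∃ g' ∈ Ideal.span {(Y^2 + Z^a : O 2), Y * Z^2},
      (g' : Cm 2 → ℂ) =ᶠ[𝓝 (0 : Cm 2)] fun x => (g : Cm 2 → ℂ) (Theta a c s x) := by
  obtain ⟨p, q, hpq⟩ := Ideal.mem_span_pair.mp hg
  have hTan : AnalyticAt ℂ (Theta a c s) 0 := Theta_analytic a c s hs
  have hT0 : Theta a c s 0 = 0 := Theta_zero a c s
  have hpan : AnalyticAt ℂ (p : Cm 2 → ℂ) (Theta a c s 0) := by
    rw [hT0]; exact p.2
  have hqan : AnalyticAt ℂ (q : Cm 2 → ℂ) (Theta a c s 0) := by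
    rw [hT0]; exact q.2
  set pT : O 2 := ⟨fun x => (p : Cm 2 → ℂ) (Theta a c s x), hpan.comp hTan⟩ with hpT
  set qT : O 2 := ⟨fun x => (q : Cm 2 → ℂ) (Theta a c s x), hqan.comp hTan⟩ with hqT
  set m1 : O 2 := ⟨fun x => Complex.exp (-(a:ℂ) * Complex.log (1 - 2*c*(s:ℂ)*(x 1))),
    mult_analytic c _ s⟩ with hm1
  set m2 : O 2 := ⟨fun x => Complex.exp ((-((a:ℂ)+4)/2) * Complex.log (1 - 2*c*(s:ℂ)*(x 1))),
    mult_analytic c _ s⟩ with hm2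
  refine ⟨pT * m1 * (Y^2 + Z^a) + qT * m2 * (Y * Z^2),
    Ideal.mem_span_pair.mpr ⟨pT * m1, qT * m2, rfl⟩, ?_⟩
  have hball : Metric.ball (0 : Cm 2) ((4*(‖c‖+1))⁻¹) ∈ 𝓝 (0 : Cm 2) :=
    Metric.ball_mem_nhds 0 (by positivity)
  filter_upwards [hball] with x hx
  rw [Metric.mem_ball, dist_zero_right] at hx
  have hwne : (1 - 2*c*(s:ℂ)*(x 1)) ≠ 0 := w_ne hs hx
  have hgx : (g : Cm 2 → ℂ) (Theta a c s x)
      = (p : Cm 2 → ℂ) (Theta a c s x) * ((Y^2 + Z^a : O 2) : Cm 2 → ℂ) (Theta a c s x)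
      + (q : Cm 2 → ℂ) (Theta a c s x) * ((Y * Z^2 : O 2) : Cm 2 → ℂ) (Theta a c s x) := by
    have := congrArg (fun u : O 2 => (u : Cm 2 → ℂ) (Theta a c s x)) hpq
    simpa using this.symm
  show ((pT * m1 * (Y^2 + Z^a) + qT * m2 * (Y * Z^2) : O 2) : Cm 2 → ℂ) x
    = (g : Cm 2 → ℂ) (Theta a c s x)
  rw [coeO_add, coeO_mul, coeO_mul, coeO_mul, coeO_mul, hgx,
    gen1_comp a c s x hwne, gen2_comp a c s x hwne]
  show (p : Cm 2 → ℂ) (Theta a c s x) * (m1 : Cm 2 → ℂ) x * _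
    + (q : Cm 2 → ℂ) (Theta a c s x) * (m2 : Cm 2 → ℂ) x * _ = _
  rw [hm1, hm2]
  ring

lemma Theta_inverse (a : ℕ) (c : ℂ) (t : ℝ) (ht : |t| ≤ 1) (x : Cm 2)
    (hx : ‖x‖ < (4*(‖c‖+1))⁻¹) :
    Theta a c t (Theta a c (-t) x) = x := by
  set w : ℂ := 1 - 2*c*((-t:ℝ):ℂ)*(x 1) with hw
  have hmt : |(-t : ℝ)| ≤ 1 := by rw [abs_neg]; exact ht
  have hwne : w ≠ 0 := w_ne hmt hx
  have harg : w.arg ≠ Real.pi := w_arg hmt hx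
  set u : Cm 2 := Theta a c (-t) x with hu
  have hu0 : u 0 = x 0 * Complex.exp (-((a:ℂ)/2) * Complex.log w) := rfl
  have hu1 : u 1 = x 1 * w⁻¹ := rfl
  have hwval : w = 1 + 2*c*(t:ℂ)*(x 1) := by rw [hw]; push_cast; ring
  have hwne2 : (1 + 2*c*(t:ℂ)*(x 1)) ≠ 0 := hwval ▸ hwne
  have hkey : 1 - 2*c*(t:ℂ)*(u 1) = w⁻¹ := by
    rw [hu1, hwval]
    field_simp
    try ring
  funext i
  fin_cases i
  · show u 0 * Complex.exp (-((a:ℂ)/2) * Complex.log (1 - 2*c*(t:ℂ)*(u 1))) = x 0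
    rw [hkey, hu0, Complex.log_inv _ harg]
    rw [mul_assoc, ← Complex.exp_add]
    rw [show -((a:ℂ)/2) * Complex.log w + -((a:ℂ)/2) * -Complex.log w = 0 from by ring]
    rw [Complex.exp_zero, mul_one]
  · show u 1 * (1 - 2*c*(t:ℂ)*(u 1))⁻¹ = x 1
    rw [hkey, inv_inv, hu1]
    field_simp
end Part5d
/-- with `E = a y ∂/∂y + 2 z ∂/∂z` (for which `y²+z^a` has
quasi-degree `2a` and `yz²` has quasi-degree `a+4`) and `X = (B/((a+4)A)) z E`
(`A ≠ 0`): `L_X (A dy∧dz) = B z dy∧dz`, `L_X (B z dy∧dz)` has zero algebraic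
restriction to `J = ⟨y²+z^a, yz²⟩`, and the flow of `X` preserves `J`. -/
theorem statement_12 (a : ℕ) (ha : 4 ≤ a) (A B : ℂ) (hA : A ≠ 0) :
    ∀ X : Fin 2 → O 2,
      X = ![(B / (((a : ℂ) + 4) * A) * (a : ℂ)) • (Z * Y),
            (2 * (B / (((a : ℂ) + 4) * A))) • (Z ^ 2)] →
      (∀ (t : ℂ) (x : Cm 2),
        ((Y ^ 2 + Z ^ a : O 2) : Cm 2 → ℂ) ![t ^ a * x 0, t ^ 2 * x 1]
          = t ^ (2 * a) * ((Y ^ 2 + Z ^ a : O 2) : Cm 2 → ℂ) x) ∧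
      (∀ (t : ℂ) (x : Cm 2),
        ((Y * Z ^ 2 : O 2) : Cm 2 → ℂ) ![t ^ a * x 0, t ^ 2 * x 1]
          = t ^ (a + 4) * ((Y * Z ^ 2 : O 2) : Cm 2 → ℂ) x) ∧
      FormEq (lieD X (twoF (A • 1))) (twoF (B • Z)) ∧
      ZeroAR (Ideal.span {Y ^ 2 + Z ^ a, Y * Z ^ 2}) (lieD X (twoF (B • Z))) ∧
      ∀ Φ : ℝ → Cm 2 → Cm 2, Φ 0 = id →
        (∀ t ∈ Set.Icc (0:ℝ) 1, ∀ x : Cm 2,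
          HasDerivAt (fun s => Φ s x) (fun i => (X i : Cm 2 → ℂ) (Φ t x)) t) →
        ∀ t ∈ Set.Icc (0:ℝ) 1,
          PreservesIdeal (Φ t) (Ideal.span {Y ^ 2 + Z ^ a, Y * Z ^ 2}) := by
  intro X hX
  subst hX
  set c : ℂ := B / (((a : ℂ) + 4) * A) with hc
  have ha4 : ((a:ℂ) + 4) ≠ 0 := by
    have h : ((a:ℂ) + 4) = ((a + 4 : ℕ) : ℂ) := by push_cast; ring
    rw [h]
    exact Nat.cast_ne_zero.mpr (by omega)
  have hcA : c * ((a:ℂ) + 4) * A = B := by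
    rw [hc]
    field_simp
    try ring
  refine ⟨?_, ?_, ?_, ?_, ?_⟩
  · intro t x
    simp only [coeO_add, coeO_pow, coeO_Y, coeO_Z, Matrix.cons_val_zero, Matrix.cons_val_one,
      Matrix.head_cons]
    rw [mul_pow, mul_pow, ← pow_mul, ← pow_mul, mul_comm a 2]
    ring
  · intro t x
    simp only [coeO_mul, coeO_pow, coeO_Y, coeO_Z, Matrix.cons_val_zero, Matrix.cons_val_one,
      Matrix.head_cons]
    rw [mul_pow, ← pow_mul, pow_add]
    ring
  · exact part3_lemma a A B c hcA
  · exact part4_lemma a B c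
  · intro Φ hΦ0 hder t ht
    have hd : ∀ s ∈ Set.Icc (0:ℝ) 1, ∀ x : Cm 2, HasDerivAt (fun u => Φ u x)
        (![(c*(a:ℂ))*(Φ s x 1 * Φ s x 0), (2*c)*(Φ s x 1 * Φ s x 1)]) s := by
      intro s hs x
      have h := hder s hs x
      convert h using 1
      funext i
      fin_cases i
      · show (c*(a:ℂ))*(Φ s x 1 * Φ s x 0)
          = ((![(c * (a:ℂ)) • (Z * Y), (2 * c) • (Z ^ 2)] : Fin 2 → O 2) 0 : Cm 2 → ℂ) (Φ s x)
        rw [Matrix.cons_val_zero, coeO_smul, coeO_mul, coeO_Z, coeO_Y]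
      · show (2*c)*(Φ s x 1 * Φ s x 1)
          = ((![(c * (a:ℂ)) • (Z * Y), (2 * c) • (Z ^ 2)] : Fin 2 → O 2) 1 : Cm 2 → ℂ) (Φ s x)
        rw [Matrix.cons_val_one, Matrix.cons_val_zero, coeO_smul, coeO_pow, coeO_Z]
        ring
    have ht1 : |t| ≤ 1 := abs_le.mpr ⟨by linarith [ht.1], ht.2⟩
    have hrpos : (0:ℝ) < (4*(‖c‖+1))⁻¹ := by positivity
    have hball : ∀ᶠ x in 𝓝 (0 : Cm 2), ‖x‖ < (4*(‖c‖+1))⁻¹ := by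
      filter_upwards [Metric.ball_mem_nhds (0 : Cm 2) hrpos] with x hx
      rwa [Metric.mem_ball, dist_zero_right] at hx
    intro f
    constructor
    · intro hf
      obtain ⟨g', hg'I, hg'⟩ := comp_mem a ha c t ht1 f hf
      refine ⟨g', hg'I, ?_⟩
      apply hg'.trans
      filter_upwards [hball] with x hx
      rw [flow_eq a c Φ hΦ0 hd x hx t ht]
    · rintro ⟨g, hgI, hg⟩
      obtain ⟨g'', hg''I, hg''⟩ := comp_mem a ha c (-t) (by rwa [abs_neg]) g hgI
      apply mem_of_germ a ha f g'' hg''I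
      have h0 : Theta a c (-t) 0 = 0 := Theta_zero a c (-t)
      have hcont : Filter.Tendsto (Theta a c (-t)) (𝓝 0) (𝓝 (0 : Cm 2)) := by
        have hca := (Theta_analytic a c (-t) (by rwa [abs_neg])).continuousAt
        rw [ContinuousAt, h0] at hca
        exact hca
      have hpre1 : ∀ᶠ x in 𝓝 (0 : Cm 2), ‖Theta a c (-t) x‖ < (4*(‖c‖+1))⁻¹ :=
        hcont.eventually hball
      have hpre2 : ∀ᶠ x in 𝓝 (0 : Cm 2),
          (g : Cm 2 → ℂ) (Theta a c (-t) x) = (f : Cm 2 → ℂ) (Φ t (Theta a c (-t) x)) :=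
        hcont.eventually hg
      filter_upwards [hg'', hpre1, hpre2, hball] with x h1 h2 h3 h4
      show (f : Cm 2 → ℂ) x = (g'' : Cm 2 → ℂ) x
      rw [h1, h3, flow_eq a c Φ hΦ0 hd (Theta a c (-t) x) h2 t ht,
        Theta_inverse a c t ht1 x h4]
end
end

section
/- For the ideal J = ⟨yz, y^a + z^b⟩ in O(C²) with a ≥ b ≥ 2, every germ of a closed 2-form on (C²,0) has algebraic restriction to J of the form A·[dy∧dz]_J for some A ∈ C; that is, the space of algebraic restrictions of closed 2-forms to J is at most 1-dimensional. -/
open Filter Topology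

set_option maxHeartbeats 1000000
set_option synthInstance.maxHeartbeats 400000

noncomputable section

section Aux
open scoped NNReal ENNReal

lemma fin2cases (i : Fin 2) : i = 0 ∨ i = 1 := by omega

lemma x_decomp (x : Cm 2) : x = x 0 • (Pi.single 0 1 : Cm 2) + x 1 • (Pi.single 1 1 : Cm 2) := by
  funext i; fin_cases i <;> simp

lemma exists_factor (g : Cm 2 → ℂ) (hg : AnalyticAt ℂ g 0) :
    ∃ u v : Cm 2 → ℂ, AnalyticAt ℂ u 0 ∧ AnalyticAt ℂ v 0 ∧
      ∀ᶠ x in 𝓝 (0 : Cm 2), g x = g 0 + x 0 * u x + x 1 * v x := by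
  obtain ⟨p, r, hp⟩ := hg
  obtain ⟨r', hr'0, hr'r⟩ : ∃ r' : ℝ≥0, 0 < r' ∧ (r' : ℝ≥0∞) < r := by
    rcases ENNReal.lt_iff_exists_nnreal_btwn.1 hp.r_pos with ⟨c, hc0, hcr⟩
    exact ⟨c, by exact_mod_cast hc0, hcr⟩
  set q : Cm 2 → FormalMultilinearSeries ℂ (Cm 2) ℂ :=
    fun e => fun n => (p (n+1)).curryLeft e with hqdef
  have hqapp : ∀ (e : Cm 2) (n : ℕ) (m : Fin n → Cm 2),
      q e n m = p (n+1) (Fin.cons e m) := fun e n m => rfl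
  have hqn : ∀ (e : Cm 2) (n : ℕ), ‖q e n‖ ≤ ‖p (n+1)‖ * ‖e‖ := by
    intro e n
    refine ContinuousMultilinearMap.opNorm_le_bound
      (mul_nonneg (norm_nonneg _) (norm_nonneg _)) (fun m => ?_)
    rw [hqapp]
    exact (p (n+1)).norm_map_cons_le e m
  obtain ⟨C, hC0, hC⟩ := p.norm_mul_pow_le_of_lt_radius (lt_of_lt_of_le hr'r hp.r_le)
  have hrad : ∀ e : Cm 2, (r' : ℝ≥0∞) ≤ (q e).radius := by
    intro e
    refine (q e).le_radius_of_bound (C / r' * ‖e‖) (fun n => ?_)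
    have h1 : ‖p (n+1)‖ * (r' : ℝ) ^ n ≤ C / r' := by
      rw [le_div_iff₀ (by exact_mod_cast hr'0)]
      calc ‖p (n+1)‖ * (r':ℝ)^n * r' = ‖p (n+1)‖ * (r':ℝ)^(n+1) := by ring
        _ ≤ C := hC (n+1)
    calc ‖q e n‖ * (r':ℝ)^n ≤ (‖p (n+1)‖ * ‖e‖) * (r':ℝ)^n :=
          mul_le_mul_of_nonneg_right (hqn e n) (by positivity)
      _ = (‖p (n+1)‖ * (r':ℝ)^n) * ‖e‖ := by ring
      _ ≤ (C / r') * ‖e‖ := mul_le_mul_of_nonneg_right h1 (norm_nonneg _)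
  have hqsum : ∀ e : Cm 2, AnalyticAt ℂ (q e).sum 0 := by
    intro e
    exact ((q e).hasFPowerSeriesOnBall
      (lt_of_lt_of_le (by exact_mod_cast hr'0) (hrad e))).analyticAt
  refine ⟨(q (Pi.single 0 1)).sum, (q (Pi.single 1 1)).sum, hqsum _, hqsum _, ?_⟩
  filter_upwards [EMetric.ball_mem_nhds (0 : Cm 2) (by exact_mod_cast hr'0 : (0:ℝ≥0∞) < r')]
    with x hx
  have hx_r : x ∈ EMetric.ball (0 : Cm 2) r := EMetric.ball_subset_ball hr'r.le hx
  have hgs : HasSum (fun n => p n (fun _ => x)) (g x) := by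
    simpa using hp.hasSum hx_r
  have hshift : HasSum (fun n => p (n+1) (fun _ => x)) (g x - g 0) := by
    rw [hasSum_nat_add_iff (f := fun n => p n (fun _ => x)) 1]
    have h0 : p 0 (fun _ => x) = g 0 := hp.coeff_zero _
    simpa [h0] using hgs
  have hsq : ∀ e : Cm 2, HasSum (fun n => q e n (fun _ => x)) ((q e).sum x) := by
    intro e
    exact (q e).hasSum (EMetric.ball_subset_ball (hrad e) hx)
  have hcomb : HasSum
      (fun n => x 0 * q (Pi.single 0 1) n (fun _ => x) + x 1 * q (Pi.single 1 1) n (fun _ => x))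
      (x 0 * (q (Pi.single 0 1)).sum x + x 1 * (q (Pi.single 1 1)).sum x) :=
    ((hsq _).mul_left (x 0)).add ((hsq _).mul_left (x 1))
  have hterm : ∀ n, x 0 * q (Pi.single 0 1) n (fun _ => x) + x 1 * q (Pi.single 1 1) n (fun _ => x)
      = p (n+1) (fun _ => x) := by
    intro n
    rw [hqapp, hqapp]
    have hx2 : (fun _ : Fin (n+1) => x) =
        Fin.cons (x 0 • (Pi.single 0 1 : Cm 2) + x 1 • (Pi.single 1 1 : Cm 2)) (fun _ => x) := by
      funext i
      refine Fin.cases ?_ ?_ i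
      · rw [Fin.cons_zero]; exact x_decomp x
      · intro j; rw [Fin.cons_succ]
    rw [hx2]
    rw [(p (n+1)).cons_add, (p (n+1)).cons_smul, (p (n+1)).cons_smul]
    simp [smul_eq_mul]
  rw [funext hterm] at hcomb
  have := hshift.unique hcomb
  linear_combination this



example (f g : O 2) (x : Cm 2) : ((f - g : O 2) : Cm 2 → ℂ) x = (f : Cm 2 → ℂ) x - (g : Cm 2 → ℂ) x := rfl
example (f g : O 2) (x : Cm 2) : ((f + g : O 2) : Cm 2 → ℂ) x = (f : Cm 2 → ℂ) x + (g : Cm 2 → ℂ) x := rfl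
example (f g : O 2) (x : Cm 2) : ((f * g : O 2) : Cm 2 → ℂ) x = (f : Cm 2 → ℂ) x * (g : Cm 2 → ℂ) x := rfl
example (f : O 2) (x : Cm 2) : ((-f : O 2) : Cm 2 → ℂ) x = -((f : Cm 2 → ℂ) x) := rfl
example (c : ℂ) (x : Cm 2) : ((c • (1:O 2) : O 2) : Cm 2 → ℂ) x = c * 1 := rfl
example (x : Cm 2) : (Y : Cm 2 → ℂ) x = x 0 := rfl
example (u : Cm 2 → ℂ) (hu : AnalyticAt ℂ u 0) (x : Cm 2) :
    (((Y * Z) * ⟨u, hu⟩ : O 2) : Cm 2 → ℂ) = fun y => y 0 * y 1 * u y := rfl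
example (u : Cm 2 → ℂ) (hu : AnalyticAt ℂ u 0) (x : Cm 2) :
    ((-((Y * Z) * ⟨u, hu⟩) : O 2) : Cm 2 → ℂ) = fun y => -(y 0 * y 1 * u y) := rfl
example (F : O 2) (i : Fin 2) (x : Cm 2) :
    ((pd i F : O 2) : Cm 2 → ℂ) x = fderiv ℂ (F : Cm 2 → ℂ) x (Pi.single i 1) := rfl

lemma fderiv_yzmul (w : Cm 2 → ℂ) (x : Cm 2) (hw : DifferentiableAt ℂ w x) (i : Fin 2) :
    fderiv ℂ (fun y : Cm 2 => y 0 * y 1 * w y) x (Pi.single i 1) =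
      (x 0 * (Pi.single i 1 : Cm 2) 1 + x 1 * (Pi.single i 1 : Cm 2) 0) * w x
        + x 0 * x 1 * fderiv ℂ w x (Pi.single i 1) := by
  have h0 : HasFDerivAt (fun y : Cm 2 => y 0)
      (ContinuousLinearMap.proj (R := ℂ) (φ := fun _ : Fin 2 => ℂ) 0) x :=
    (ContinuousLinearMap.proj (R := ℂ) (φ := fun _ : Fin 2 => ℂ) 0).hasFDerivAt
  have h1 : HasFDerivAt (fun y : Cm 2 => y 1)
      (ContinuousLinearMap.proj (R := ℂ) (φ := fun _ : Fin 2 => ℂ) 1) x :=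
    (ContinuousLinearMap.proj (R := ℂ) (φ := fun _ : Fin 2 => ℂ) 1).hasFDerivAt
  have hfull := (h0.mul h1).mul hw.hasFDerivAt
  rw [show (fun y : Cm 2 => y 0 * y 1 * w y) = ((fun y : Cm 2 => y 0) * fun y => y 1) * w
    from rfl, hfull.fderiv]
  simp only [ContinuousLinearMap.add_apply, ContinuousLinearMap.smul_apply,
    ContinuousLinearMap.proj_apply, smul_eq_mul, Pi.mul_apply]
  ring


lemma O_sub_apply (f g : O 2) (x : Cm 2) :
    ((f - g : O 2) : Cm 2 → ℂ) x = (f : Cm 2 → ℂ) x - (g : Cm 2 → ℂ) x := rfl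
lemma O_add_apply (f g : O 2) (x : Cm 2) :
    ((f + g : O 2) : Cm 2 → ℂ) x = (f : Cm 2 → ℂ) x + (g : Cm 2 → ℂ) x := rfl
lemma O_neg_apply (f : O 2) (x : Cm 2) :
    ((-f : O 2) : Cm 2 → ℂ) x = -((f : Cm 2 → ℂ) x) := rfl
lemma O_mul_apply (f g : O 2) (x : Cm 2) :
    ((f * g : O 2) : Cm 2 → ℂ) x = (f : Cm 2 → ℂ) x * (g : Cm 2 → ℂ) x := rfl
lemma O_smul_apply (c : ℂ) (f : O 2) (x : Cm 2) :
    ((c • f : O 2) : Cm 2 → ℂ) x = c * (f : Cm 2 → ℂ) x := rfl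
lemma O_one_apply (x : Cm 2) : ((1 : O 2) : Cm 2 → ℂ) x = 1 := rfl
lemma O_zero_apply (x : Cm 2) : ((0 : O 2) : Cm 2 → ℂ) x = 0 := rfl
lemma O_mk_coe (u : Cm 2 → ℂ) (hu : AnalyticAt ℂ u 0) :
    ((⟨u, hu⟩ : O 2) : Cm 2 → ℂ) = u := rfl
lemma pd_apply (i : Fin 2) (F : O 2) (x : Cm 2) :
    ((pd i F : O 2) : Cm 2 → ℂ) x = fderiv ℂ (F : Cm 2 → ℂ) x (Pi.single i 1) := rfl
lemma Y_apply (x : Cm 2) : (Y : Cm 2 → ℂ) x = x 0 := rfl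
lemma Z_apply (x : Cm 2) : (Z : Cm 2 → ℂ) x = x 1 := rfl

lemma YZmul_coe (F : O 2) :
    ((Y * Z * F : O 2) : Cm 2 → ℂ) = fun y => y 0 * y 1 * (F : Cm 2 → ℂ) y := rfl
lemma O_neg_coe (F : O 2) :
    ((-F : O 2) : Cm 2 → ℂ) = fun y => -((F : Cm 2 → ℂ) y) := rfl

lemma extD_oneF (G H : O 2) (J : Fin 2 → Fin 2) :
    extD (oneF G H) J
      = pd (J 0) (if J 1 = 0 then G else H) - pd (J 1) (if J 0 = 0 then G else H) := by
  have e1 : (J ∘ (0 : Fin 2).succAbove) = fun _ : Fin 1 => J 1 := by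
    funext j
    have : j = 0 := Subsingleton.elim _ _
    subst this
    show J ((0 : Fin 2).succAbove 0) = J 1
    congr 1
  have e2 : (J ∘ (1 : Fin 2).succAbove) = fun _ : Fin 1 => J 0 := by
    funext j
    have : j = 0 := Subsingleton.elim _ _
    subst this
    show J ((1 : Fin 2).succAbove 0) = J 0
    congr 1
  show (∑ i : Fin 2, ((-1 : ℂ) ^ (i : ℕ)) • pd (J i) (oneF G H (J ∘ i.succAbove))) = _
  rw [Fin.sum_univ_two, e1, e2]
  simp [oneF, sub_eq_add_neg]

end Aux

/-- for `J = ⟨yz, y^a + z^b⟩`, `a ≥ b ≥ 2`, every closed 2-form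
germ on `(ℂ²,0)` has algebraic restriction to `J` of the form `A·[dy∧dz]_J`. -/
theorem statement_19 (a b : ℕ) (hb : 2 ≤ b) (hab : b ≤ a)
    (ω : Form 2 2) (hAlt : IsAlt ω) (hclosed : FormEq (extD ω) 0) :
    ∃ A : ℂ, ZeroAR (Ideal.span {Y * Z, Y ^ a + Z ^ b}) (ω - twoF (A • 1)) := by
  classical
  set I := Ideal.span {Y * Z, Y ^ a + Z ^ b} with hIdef
  have hYZ : Y * Z ∈ I := Ideal.subset_span (Set.mem_insert _ _)
  set f : O 2 := ω ![0, 1] with hfdef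
  have hfa : AnalyticAt ℂ (f : Cm 2 → ℂ) 0 := f.2
  set A : ℂ := (f : Cm 2 → ℂ) 0 with hAdef
  obtain ⟨u, v, hu, hv, huv⟩ := exists_factor (fun x => (f : Cm 2 → ℂ) x - A)
    (hfa.sub analyticAt_const)
  set U : O 2 := ⟨u, hu⟩ with hUdef
  set V : O 2 := ⟨v, hv⟩ with hVdef
  set G : O 2 := -((Y * Z) * U) with hGdef
  set H : O 2 := (Y * Z) * V with hHdef
  set W : O 2 := pd 0 V + pd 1 U with hWdef
  refine ⟨A, twoF (-((Y * Z) * W)), oneF G H, ?_, ?_, ?_⟩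
  · intro J
    unfold twoF
    split_ifs
    · exact neg_mem (Ideal.mul_mem_right _ _ hYZ)
    · exact neg_mem (neg_mem (Ideal.mul_mem_right _ _ hYZ))
    · exact zero_mem _
  · intro K
    unfold oneF
    split_ifs
    · exact neg_mem (Ideal.mul_mem_right _ _ hYZ)
    · exact Ideal.mul_mem_right _ _ hYZ
  · intro J
    have hud : ∀ᶠ x in 𝓝 (0 : Cm 2), DifferentiableAt ℂ u x := by
      filter_upwards [hu.eventually_analyticAt] with x hx using hx.differentiableAt
    have hvd : ∀ᶠ x in 𝓝 (0 : Cm 2), DifferentiableAt ℂ v x := by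
      filter_upwards [hv.eventually_analyticAt] with x hx using hx.differentiableAt
    have key : ∀ᶠ x in 𝓝 (0 : Cm 2), (f : Cm 2 → ℂ) x - A = x 0 * u x + x 1 * v x := by
      filter_upwards [huv] with x hx
      rw [hx]; ring
    have hswap : (![1, 0] : Fin 2 → Fin 2) = ![0, 1] ∘ (Equiv.swap (0 : Fin 2) 1) := by
      funext i; fin_cases i <;> simp
    have h10 : ω ![1, 0] = -f := by
      rw [hswap, hAlt.2 ![0, 1] (Equiv.swap (0 : Fin 2) 1),
        Equiv.Perm.sign_swap (by decide)]
      simp [hfdef]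
    rcases fin2cases (J 0) with h0 | h0 <;> rcases fin2cases (J 1) with h1 | h1
    · -- (0,0)
      have hJ : J = ![0, 0] := by funext i; fin_cases i <;> simp [h0, h1]
      subst hJ
      have hL : (ω - twoF (A • 1)) ![0, 0] = 0 := by
        show ω ![0, 0] - twoF (A • 1) ![0, 0] = 0
        rw [hAlt.1 _ (by decide)]
        simp [twoF]
      have hR : (twoF (-((Y * Z) * W)) + dLow (p := 2) (oneF G H)) ![0, 0] = 0 := by
        show twoF (-((Y * Z) * W)) ![0, 0] + extD (oneF G H) ![0, 0] = 0
        rw [extD_oneF]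
        simp [twoF]
      rw [hL, hR]
    · -- (0,1)
      have hJ : J = ![0, 1] := by funext i; fin_cases i <;> simp [h0, h1]
      subst hJ
      have hL : (ω - twoF (A • 1)) ![0, 1] = f - A • 1 := by
        show ω ![0, 1] - twoF (A • 1) ![0, 1] = f - A • 1
        simp [twoF, hfdef]
      have hR : (twoF (-((Y * Z) * W)) + dLow (p := 2) (oneF G H)) ![0, 1]
          = -((Y * Z) * W) + (pd 0 H - pd 1 G) := by
        show twoF (-((Y * Z) * W)) ![0, 1] + extD (oneF G H) ![0, 1] = _
        rw [extD_oneF]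
        simp [twoF]
      rw [hL, hR, hGdef, hHdef, hWdef]
      filter_upwards [key, hud, hvd] with x hx hux hvx
      simp only [O_sub_apply, O_add_apply, O_neg_apply, O_mul_apply, O_smul_apply,
        O_one_apply, pd_apply, O_neg_coe, YZmul_coe, O_mk_coe, Y_apply, Z_apply, fderiv_fun_neg,
        ContinuousLinearMap.neg_apply]
      rw [fderiv_yzmul v x hvx 0, fderiv_yzmul u x hux 1]
      have e1 : (Pi.single (0 : Fin 2) (1 : ℂ) : Cm 2) 0 = 1 := by simp
      have e2 : (Pi.single (0 : Fin 2) (1 : ℂ) : Cm 2) 1 = 0 := by simp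
      have e3 : (Pi.single (1 : Fin 2) (1 : ℂ) : Cm 2) 0 = 0 := by simp
      have e4 : (Pi.single (1 : Fin 2) (1 : ℂ) : Cm 2) 1 = 1 := by simp
      rw [e1, e2, e3, e4]
      linear_combination hx
    · -- (1,0)
      have hJ : J = ![1, 0] := by funext i; fin_cases i <;> simp [h0, h1]
      subst hJ
      have hL : (ω - twoF (A • 1)) ![1, 0] = -(f - A • 1) := by
        show ω ![1, 0] - twoF (A • 1) ![1, 0] = -(f - A • 1)
        rw [h10]
        simp [twoF]
        abel
      have hR : (twoF (-((Y * Z) * W)) + dLow (p := 2) (oneF G H)) ![1, 0]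
          = -(-((Y * Z) * W) + (pd 0 H - pd 1 G)) := by
        show twoF (-((Y * Z) * W)) ![1, 0] + extD (oneF G H) ![1, 0] = _
        rw [extD_oneF]
        simp [twoF]
        ring
      rw [hL, hR, hGdef, hHdef, hWdef]
      filter_upwards [key, hud, hvd] with x hx hux hvx
      simp only [O_sub_apply, O_add_apply, O_neg_apply, O_mul_apply, O_smul_apply,
        O_one_apply, pd_apply, O_neg_coe, YZmul_coe, O_mk_coe, Y_apply, Z_apply, fderiv_fun_neg,
        ContinuousLinearMap.neg_apply]
      rw [fderiv_yzmul v x hvx 0, fderiv_yzmul u x hux 1]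
      have e1 : (Pi.single (0 : Fin 2) (1 : ℂ) : Cm 2) 0 = 1 := by simp
      have e2 : (Pi.single (0 : Fin 2) (1 : ℂ) : Cm 2) 1 = 0 := by simp
      have e3 : (Pi.single (1 : Fin 2) (1 : ℂ) : Cm 2) 0 = 0 := by simp
      have e4 : (Pi.single (1 : Fin 2) (1 : ℂ) : Cm 2) 1 = 1 := by simp
      rw [e1, e2, e3, e4]
      linear_combination -hx
    · -- (1,1)
      have hJ : J = ![1, 1] := by funext i; fin_cases i <;> simp [h0, h1]
      subst hJ
      have hL : (ω - twoF (A • 1)) ![1, 1] = 0 := by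
        show ω ![1, 1] - twoF (A • 1) ![1, 1] = 0
        rw [hAlt.1 _ (by decide)]
        simp [twoF]
      have hR : (twoF (-((Y * Z) * W)) + dLow (p := 2) (oneF G H)) ![1, 1] = 0 := by
        show twoF (-((Y * Z) * W)) ![1, 1] + extD (oneF G H) ![1, 1] = 0
        rw [extD_oneF]
        simp [twoF]
      rw [hL, hR]
end
end
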